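/- Let Δ = ⋂_{i=1}^d {x ∈ ℝⁿ : ⟨x, v_i⟩ ≤ λ_i} be a compact polytope of dimension n, and for t > 0 set Δᵗ = ⋂_{i=1}^d {x : ⟨x, v_i⟩ ≤ λ_i − t}. Suppose t₁ > 0 is the smallest t with dim Δ^{t} < n, and suppose Δ^{t₁} is nonempty. Then there exists an index i ∈ {1,...,d} such that Δ^{t₁} is entirely contained in the hyperplane {x : ⟨x, v_i⟩ = λ_i − t₁}. -/

import Mathlib

open Matrix

/-- If `t₁ > 0` is the first time at which the dimension of the simultaneously shrunk
polytope `Δᵗ = {x | ∀ i, ⟨x, vᵢ⟩ ≤ λᵢ - t}` drops below `n`, and `Δ^{t₁}` is nonempty,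
then some hyperplane `{x | ⟨x, vᵢ⟩ = λᵢ - t₁}` contains all of `Δ^{t₁}`. -/
theorem stmt1 (n d : ℕ) (v : Fin d → Fin n → ℝ) (lam : Fin d → ℝ) (t₁ : ℝ)
    (Δ : ℝ → Set (Fin n → ℝ))
    (hΔ : ∀ t, Δ t = {x | ∀ i, x ⬝ᵥ v i ≤ lam i - t})
    (hv : ∀ i, v i ≠ 0)
    (hcompact : IsCompact (Δ 0))
    (hfull : Module.finrank ℝ (affineSpan ℝ (Δ 0)).direction = n)
    (ht₁ : 0 < t₁)
    (hbefore : ∀ t, 0 < t → t < t₁ →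
      Module.finrank ℝ (affineSpan ℝ (Δ t)).direction = n)
    (hdrop : Module.finrank ℝ (affineSpan ℝ (Δ t₁)).direction < n)
    (hne : (Δ t₁).Nonempty) :
    ∃ i, ∀ x ∈ Δ t₁, x ⬝ᵥ v i = lam i - t₁ := by
  by_contra hcon
  push_neg at hcon
  -- for each i, pick a point of Δ t₁ where constraint i is strict
  choose p hp hpne using hcon
  obtain ⟨x₀, hx₀⟩ := hne
  have hmem : ∀ x ∈ Δ t₁, ∀ i, x ⬝ᵥ v i ≤ lam i - t₁ := by
    intro x hx i
    rw [hΔ t₁] at hx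
    exact hx i
  have hstrict : ∀ i, p i ⬝ᵥ v i < lam i - t₁ :=
    fun i => lt_of_le_of_ne (hmem _ (hp i) i) (hpne i)
  -- the averaged point satisfies all constraints strictly
  set y : Fin n → ℝ := ((d : ℝ) + 1)⁻¹ • (x₀ + ∑ j, p j) with hy
  have hdpos : (0 : ℝ) < (d : ℝ) + 1 := by positivity
  have hystrict : ∀ i, y ⬝ᵥ v i < lam i - t₁ := by
    intro i
    have h1 : (x₀ + ∑ j, p j) ⬝ᵥ v i = x₀ ⬝ᵥ v i + ∑ j, p j ⬝ᵥ v i := by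
      rw [add_dotProduct]
      congr 1
      simp only [dotProduct, Finset.sum_apply, Finset.sum_mul]
      exact Finset.sum_comm
    have h2 : ∑ j, p j ⬝ᵥ v i < (d : ℝ) * (lam i - t₁) := by
      calc ∑ j, p j ⬝ᵥ v i < ∑ _j : Fin d, (lam i - t₁) := by
            apply Finset.sum_lt_sum (fun j _ => hmem _ (hp j) i)
            exact ⟨i, Finset.mem_univ i, hstrict i⟩
        _ = (d : ℝ) * (lam i - t₁) := by simp [mul_comm]; ring
    have h3 : (x₀ + ∑ j, p j) ⬝ᵥ v i < ((d : ℝ) + 1) * (lam i - t₁) := by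
      rw [h1]
      have := hmem _ hx₀ i
      nlinarith
    have : y ⬝ᵥ v i = ((d : ℝ) + 1)⁻¹ * ((x₀ + ∑ j, p j) ⬝ᵥ v i) := by
      rw [hy, smul_dotProduct]; rfl
    rw [this]
    calc ((d : ℝ) + 1)⁻¹ * ((x₀ + ∑ j, p j) ⬝ᵥ v i)
        < ((d : ℝ) + 1)⁻¹ * (((d : ℝ) + 1) * (lam i - t₁)) := by
          exact mul_lt_mul_of_pos_left h3 (by positivity)
      _ = lam i - t₁ := by field_simp
  -- the strict region is open and contained in Δ t₁
  set S : Set (Fin n → ℝ) := {x | ∀ i, x ⬝ᵥ v i < lam i - t₁} with hS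
  have hSopen : IsOpen S := by
    have : S = ⋂ i, {x : Fin n → ℝ | x ⬝ᵥ v i < lam i - t₁} := by
      ext x; simp [hS]
    rw [this]
    apply isOpen_iInter_of_finite
    intro i
    have hc : Continuous fun x : Fin n → ℝ => x ⬝ᵥ v i := by
      unfold dotProduct
      exact continuous_finset_sum _ fun j _ => (continuous_apply j).mul continuous_const
    exact isOpen_lt hc continuous_const
  have hSsub : S ⊆ Δ t₁ := by
    intro x hx
    rw [hΔ t₁]
    exact fun i => le_of_lt (hx i)
  have hSne : S.Nonempty := ⟨y, hystrict⟩
  have htop : affineSpan ℝ (Δ t₁) = ⊤ := by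
    have h := hSopen.affineSpan_eq_top hSne
    have hmono := affineSpan_mono ℝ hSsub
    rw [h] at hmono
    exact top_le_iff.mp hmono
  rw [htop] at hdrop
  have : (⊤ : AffineSubspace ℝ (Fin n → ℝ)).direction = ⊤ :=
    AffineSubspace.direction_top ℝ _ _
  rw [this] at hdrop
  have : Module.finrank ℝ (⊤ : Submodule ℝ (Fin n → ℝ)) = n := by
    rw [finrank_top]; simp
  omega
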